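/- Let D be a UFD and let S be the set of irreducible factors of a fixed nonzero element f ∈ D. If D has the property that, after inverting all irreducible elements not associate to a divisor of f, only finitely many height-one prime ideals remain, then the resulting localization is a principal ideal domain (in fact a semilocal PID). -/

import Mathlib

/-- The reduction step in the proof of Theorem 2.2: let `D` be a UFD, `f ∈ D` nonzero,
and let `D'` be the localization of `D` at the multiplicative set generated by the
irreducible elements not dividing `f` (equivalently, not associate to any irreducible
divisor of `f`).  If `D'` has only finitely many height-one prime ideals (the minimal
nonzero primes), then `D'` is a principal ideal domain with only finitely many maximal
ideals, i.e. a semilocal PID. -/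
theorem localization_semilocal_PID
    (D : Type*) [CommRing D] [IsDomain D] [UniqueFactorizationMonoid D]
    (f : D) (hf : f ≠ 0)
    (D' : Type*) [CommRing D'] [Algebra D D']
    [IsLocalization (Submonoid.closure {s : D | Irreducible s ∧ ¬ s ∣ f}) D']
    (hfin : {P : Ideal D' | P.IsPrime ∧ P ≠ ⊥ ∧
      ∀ Q : Ideal D', Q.IsPrime → Q ≠ ⊥ → Q ≤ P → Q = P}.Finite) :
    IsDomain D' ∧ IsPrincipalIdealRing D' ∧ {P : Ideal D' | P.IsMaximal}.Finite := by
  classical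
  set M := Submonoid.closure {s : D | Irreducible s ∧ ¬ s ∣ f} with hM
  set S := {P : Ideal D' | P.IsPrime ∧ P ≠ ⊥ ∧
      ∀ Q : Ideal D', Q.IsPrime → Q ≠ ⊥ → Q ≤ P → Q = P} with hS
  have hMle : M ≤ nonZeroDivisors D := by
    rw [hM, Submonoid.closure_le]
    intro s hs
    exact mem_nonZeroDivisors_of_ne_zero hs.1.ne_zero
  haveI hdom : IsDomain D' := IsLocalization.isDomain_of_le_nonZeroDivisors (M := M) (S := D') hMle
  have hinj : Function.Injective (algebraMap D D') := IsLocalization.injective D' hMle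
  -- In the UFD `D`, the span of a prime element is a minimal nonzero prime.
  have key : ∀ p : D, Prime p → ∀ Q : Ideal D, Q.IsPrime → Q ≠ ⊥ →
      Q ≤ Ideal.span {p} → Q = Ideal.span {p} := by
    intro p hp Q hQ hQne hle
    refine le_antisymm hle ?_
    obtain ⟨q, hqQ, hq⟩ := hQ.exists_mem_prime_of_ne_bot hQne
    have hpq : p ∣ q := Ideal.mem_span_singleton.1 (hle hqQ)
    obtain ⟨u, hu⟩ := hp.associated_of_dvd hq hpq
    have hpQ : p ∈ Q := by
      have : q * (u⁻¹ : Dˣ) ∈ Q := Ideal.mul_mem_right _ _ hqQ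
      rwa [← hu, mul_assoc, Units.mul_inv, mul_one] at this
    rwa [Ideal.span_le, Set.singleton_subset_iff]
  -- Spans of images of suitable prime elements of `D` lie in `S`.
  have hspanS : ∀ p : D, Prime p → ¬ IsUnit (algebraMap D D' p) →
      Ideal.span {algebraMap D D' p} ∈ S := by
    intro p hp hpu
    have hdisj : Disjoint (M : Set D) ((Ideal.span {p} : Ideal D) : Set D) := by
      rw [Set.disjoint_left]
      intro m hm hmspan
      obtain ⟨c, hc⟩ := Ideal.mem_span_singleton.1 hmspan
      have hmu : IsUnit (algebraMap D D' m) := IsLocalization.map_units D' (⟨m, hm⟩ : M)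
      exact hpu (isUnit_of_dvd_unit (Dvd.intro _ (by rw [← map_mul, ← hc])) hmu)
    have hspan_eq : Ideal.map (algebraMap D D') (Ideal.span {p}) =
        Ideal.span {algebraMap D D' p} := by
      rw [Ideal.map_span, Set.image_singleton]
    have hprime : (Ideal.span {algebraMap D D' p}).IsPrime := by
      rw [← hspan_eq]
      exact IsLocalization.isPrime_of_isPrime_disjoint M D' _
        ((Ideal.span_singleton_prime hp.ne_zero).2 hp) hdisj
    have hne : Ideal.span {algebraMap D D' p} ≠ ⊥ := by
      rw [Ne, Ideal.span_singleton_eq_bot]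
      intro h0
      exact hp.ne_zero (hinj (by rw [h0, map_zero]))
    refine ⟨hprime, hne, ?_⟩
    intro R hR hRne hle
    have hcom : (R.comap (algebraMap D D')).IsPrime := hR.comap _
    have hcomne : R.comap (algebraMap D D') ≠ ⊥ := by
      intro h
      apply hRne
      rw [← IsLocalization.map_comap M D' R, Ideal.under_def, h, Ideal.map_bot]
    have hcomle : R.comap (algebraMap D D') ≤ Ideal.span {p} := by
      have := Ideal.comap_mono (f := algebraMap D D') (hspan_eq ▸ hle)
      have h2 := IsLocalization.under_map_of_isPrime_disjoint M D'
        ((Ideal.span_singleton_prime hp.ne_zero).2 hp) hdisj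
      rw [Ideal.under_def] at h2
      rwa [h2] at this
    have := key p hp _ hcom hcomne hcomle
    rw [← IsLocalization.map_comap M D' R, Ideal.under_def, this, hspan_eq]
  -- Every nonzero prime of `D'` lies in `S` and is principal.
  have main : ∀ P' : Ideal D', P'.IsPrime → P' ≠ ⊥ → P' ∈ S ∧ P'.IsPrincipal := by
    intro P' hP' hP'ne
    have hcom : (P'.comap (algebraMap D D')).IsPrime := hP'.comap _
    have hcomne : P'.comap (algebraMap D D') ≠ ⊥ := by
      intro h
      apply hP'ne
      rw [← IsLocalization.map_comap M D' P', Ideal.under_def, h, Ideal.map_bot]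
    obtain ⟨p, hpP, hp⟩ := hcom.exists_mem_prime_of_ne_bot hcomne
    have hpu : ¬ IsUnit (algebraMap D D' p) := fun hu =>
      hP'.ne_top (Ideal.eq_top_of_isUnit_mem _ hpP hu)
    have hQS := hspanS p hp hpu
    have hQle : Ideal.span {algebraMap D D' p} ≤ P' := by
      rw [Ideal.span_le, Set.singleton_subset_iff]; exact hpP
    -- prime avoidance: `P'` is covered by the finitely many members of `S`
    have hcover : (P' : Set D') ⊆ ⋃ Q ∈ (hfin.toFinset : Set (Ideal D')), (Q : Set D') := by
      intro x hx
      by_cases hx0 : x = 0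
      · exact Set.mem_biUnion (by rwa [Set.Finite.coe_toFinset])
          (by rw [hx0]; exact (Ideal.span {algebraMap D D' p}).zero_mem)
      · have hxnu : ¬ IsUnit x := fun hu => hP'.ne_top (Ideal.eq_top_of_isUnit_mem _ hx hu)
        obtain ⟨a, m, hxm⟩ := IsLocalization.exists_mk'_eq (M := M) x
        have hspec : x * algebraMap D D' m = algebraMap D D' a := by
          rw [← hxm]; exact IsLocalization.mk'_spec D' a m
        have hmu : IsUnit (algebraMap D D' (m : D)) := IsLocalization.map_units D' m
        have ha0 : a ≠ 0 := by
          intro h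
          apply hx0
          have : x * algebraMap D D' m = 0 := by rw [hspec, h, map_zero]
          rcases mul_eq_zero.1 this with h' | h'
          · exact h'
          · exact absurd h' hmu.ne_zero
        obtain ⟨fs, hfs, hassoc⟩ := UniqueFactorizationMonoid.exists_prime_factors a ha0
        have hdvdx : ∀ q ∈ fs, algebraMap D D' q ∣ x := by
          intro q hq
          have h1 : q ∣ a := (Multiset.dvd_prod hq).trans hassoc.dvd
          have h2 : algebraMap D D' q ∣ x * algebraMap D D' m := by
            rw [hspec]; exact map_dvd _ h1
          exact hmu.dvd_mul_right.1 h2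
        have hqex : ∃ q ∈ fs, ¬ IsUnit (algebraMap D D' q) := by
          by_contra h
          push_neg at h
          apply hxnu
          have hprod : IsUnit (algebraMap D D' fs.prod) := by
            rw [map_multiset_prod]
            refine Multiset.prod_induction _ _ (fun a b ha hb => ha.mul hb) isUnit_one ?_
            intro y hy
            obtain ⟨q, hq, rfl⟩ := Multiset.mem_map.1 hy
            exact h q hq
          have hau : IsUnit (algebraMap D D' a) := by
            obtain ⟨u, hu⟩ := hassoc
            rw [← hu, map_mul]
            exact hprod.mul (u.isUnit.map _)
          rw [← hspec] at hau
          exact (isUnit_of_mul_isUnit_left hau)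
        obtain ⟨q, hqfs, hqnu⟩ := hqex
        exact Set.mem_biUnion (by rw [Set.Finite.coe_toFinset]; exact hspanS q (hfs q hqfs) hqnu)
          (Ideal.mem_span_singleton.2 (hdvdx q hqfs))
    obtain ⟨Q, hQmem, hPQ⟩ := (Ideal.subset_union_prime (f := id) ⊥ ⊥
      (fun i hi _ _ => (hfin.mem_toFinset.1 hi).1)).1 hcover
    have hQS' : Q ∈ S := hfin.mem_toFinset.1 hQmem
    have heq : Ideal.span {algebraMap D D' p} = Q :=
      hQS'.2.2 _ hQS.1 hQS.2.1 (le_trans hQle hPQ)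
    have hP'eq : P' = Ideal.span {algebraMap D D' p} :=
      le_antisymm (heq ▸ hPQ) hQle
    exact ⟨hP'eq ▸ (heq ▸ hQS'), hP'eq ▸ ⟨⟨_, rfl⟩⟩⟩
  refine ⟨hdom, ?_, ?_⟩
  · refine IsPrincipalIdealRing.of_prime fun P hP => ?_
    by_cases hPb : P = ⊥
    · rw [hPb]; exact ⟨⟨0, (Ideal.span_singleton_eq_bot.2 rfl).symm⟩⟩
    · exact (main P hP hPb).2
  · refine Set.Finite.subset (hfin.union (Set.finite_singleton ⊥)) ?_
    intro P hP
    by_cases hPb : P = ⊥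
    · exact Or.inr hPb
    · exact Or.inl ((main P hP.isPrime hPb).1)
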